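/- Let λ > 0, let σ be a real p×p matrix with σσᵀ invertible, set R := λ(σσᵀ)⁻¹, let B : ℝⁿ → ℝ^{n×p}, f : ℝ × ℝⁿ → ℝⁿ and q : ℝ × ℝⁿ → ℝ be given, and let V : ℝ × ℝⁿ → ℝ be such that at a point (t,x) the partial derivative ∂ₜV exists and x ↦ V(t,x) is twice differentiable. Define Z := exp(−V/λ). Then V satisfies the minimized stochastic HJB equation −∂ₜV(t,x) = q(t,x) + f(t,x)ᵀ∇ₓV(t,x) − (1/2)∇ₓV(t,x)ᵀB(x)R⁻¹B(x)ᵀ∇ₓV(t,x) + (1/2)tr(B(x)σσᵀB(x)ᵀ·Hessₓ V(t,x)) at (t,x) if and only if Z satisfies the linear partial differential equation ∂ₜZ(t,x) = (q(t,x)/λ)Z(t,x) − f(t,x)ᵀ∇ₓZ(t,x) − (1/2)tr(B(x)σσᵀB(x)ᵀ·Hessₓ Z(t,x)) at (t,x). -/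

import Mathlib

open Matrix

/-- The gradient of `V : ℝⁿ → ℝ` at `x`, as the vector of partial derivatives. -/
noncomputable def gradv {n : ℕ} (V : (Fin n → ℝ) → ℝ) (x : Fin n → ℝ) : Fin n → ℝ :=
  fun i => fderiv ℝ V x (Pi.single i 1)

/-- The Hessian of `V : ℝⁿ → ℝ` at `x`, as the matrix of second partial derivatives. -/
noncomputable def hessm {n : ℕ} (V : (Fin n → ℝ) → ℝ) (x : Fin n → ℝ) :
    Matrix (Fin n) (Fin n) ℝ :=
  Matrix.of fun i j => fderiv ℝ (fun y => fderiv ℝ V y (Pi.single j 1)) x (Pi.single i 1)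

private lemma trace_mul_vecMulVec {n : ℕ} (A : Matrix (Fin n) (Fin n) ℝ) (G : Fin n → ℝ) :
    (A * Matrix.vecMulVec G G).trace = G ⬝ᵥ (A *ᵥ G) := by
  simp only [Matrix.trace, Matrix.diag, Matrix.mul_apply, Matrix.vecMulVec_apply,
    dotProduct, Matrix.mulVec, Finset.mul_sum]
  exact Finset.sum_congr rfl fun i _ => Finset.sum_congr rfl fun j _ => by ring

/-- With `R = λ(σσᵀ)⁻¹` and `Z = exp(−V/λ)`, the value function `V`
satisfies the minimized stochastic HJB equation
`−∂ₜV = q + fᵀ∇ₓV − (1/2)∇ₓVᵀBR⁻¹Bᵀ∇ₓV + (1/2)tr(BσσᵀBᵀ HessₓV)` at `(t,x)`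
if and only if `Z` satisfies the linear PDE
`∂ₜZ = (q/λ)Z − fᵀ∇ₓZ − (1/2)tr(BσσᵀBᵀ HessₓZ)` at `(t,x)`. -/
theorem hjb_linearization {n p : ℕ} (lam : ℝ) (hlam : 0 < lam)
    (sg : Matrix (Fin p) (Fin p) ℝ) (hsg : IsUnit (sg * sgᵀ).det)
    (R : Matrix (Fin p) (Fin p) ℝ) (hR : R = lam • (sg * sgᵀ)⁻¹)
    (B : (Fin n → ℝ) → Matrix (Fin n) (Fin p) ℝ)
    (f : ℝ → (Fin n → ℝ) → (Fin n → ℝ))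
    (q : ℝ → (Fin n → ℝ) → ℝ)
    (V : ℝ → (Fin n → ℝ) → ℝ) (t : ℝ) (x : Fin n → ℝ)
    (ht : DifferentiableAt ℝ (fun s => V s x) t)
    (hx1 : ∀ᶠ y in nhds x, DifferentiableAt ℝ (V t) y)
    (hx2 : DifferentiableAt ℝ (fderiv ℝ (V t)) x)
    (Z : ℝ → (Fin n → ℝ) → ℝ)
    (hZ : Z = fun s y => Real.exp (-V s y / lam)) :
    (-deriv (fun s => V s x) t =
        q t x + (f t x ⬝ᵥ gradv (V t) x)
          - (1 / 2) * (gradv (V t) x ⬝ᵥ ((B x * R⁻¹ * (B x)ᵀ) *ᵥ gradv (V t) x))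
          + (1 / 2) * ((B x * sg * sgᵀ * (B x)ᵀ) * hessm (V t) x).trace) ↔
    (deriv (fun s => Z s x) t =
        (q t x / lam) * Z t x - (f t x ⬝ᵥ gradv (Z t) x)
          - (1 / 2) * ((B x * sg * sgᵀ * (B x)ᵀ) * hessm (Z t) x).trace) := by
  subst hZ hR
  have hlam' : lam ≠ 0 := ne_of_gt hlam
  have hVx : DifferentiableAt ℝ (V t) x := hx1.self_of_nhds
  set G : Fin n → ℝ := gradv (V t) x with hG
  set H : Matrix (Fin n) (Fin n) ℝ := hessm (V t) x with hH
  set A : Matrix (Fin n) (Fin n) ℝ := B x * sg * sgᵀ * (B x)ᵀ with hA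
  set E : ℝ := Real.exp (-V t x / lam) with hE
  have hEpos : 0 < E := Real.exp_pos _
  set dV : ℝ := deriv (fun s => V s x) t with hdV
  set F : ℝ := f t x ⬝ᵥ G with hF
  set S : ℝ := G ⬝ᵥ (A *ᵥ G) with hS
  set T : ℝ := (A * H).trace with hT
  -- R inverse
  have hRinv : (lam • (sg * sgᵀ)⁻¹)⁻¹ = lam⁻¹ • (sg * sgᵀ) := by
    apply Matrix.inv_eq_right_inv
    rw [Matrix.smul_mul, Matrix.mul_smul, smul_smul, mul_inv_cancel₀ hlam',
      Matrix.nonsing_inv_mul _ hsg, one_smul]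
  have hBR : B x * (lam • (sg * sgᵀ)⁻¹)⁻¹ * (B x)ᵀ = lam⁻¹ • A := by
    rw [hRinv, Matrix.mul_smul, Matrix.smul_mul, hA, Matrix.mul_assoc (B x) sg sgᵀ]
  have hSsmul : G ⬝ᵥ ((lam⁻¹ • A) *ᵥ G) = lam⁻¹ * S := by
    rw [Matrix.smul_mulVec, dotProduct_smul, smul_eq_mul, hS]
  -- time derivative of Z
  have hdZ : deriv (fun s => Real.exp (-V s x / lam)) t = E * (-(1 / lam) * dV) := by
    have h1 : HasDerivAt (fun s => -V s x / lam) (-dV / lam) t :=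
      (ht.hasDerivAt.neg).div_const lam
    have h2 := h1.exp
    rw [h2.deriv, hE]
    field_simp
  -- spatial derivative of Z at differentiable points
  have hfder : ∀ y, DifferentiableAt ℝ (V t) y → ∀ v : Fin n → ℝ,
      fderiv ℝ (fun z => Real.exp (-V t z / lam)) y v
        = Real.exp (-V t y / lam) * (-(1 / lam)) * fderiv ℝ (V t) y v := by
    intro y hy v
    have h1 : HasFDerivAt (fun z => -V t z / lam) (lam⁻¹ • -fderiv ℝ (V t) y) y := by
      have := (hy.hasFDerivAt.neg).mul_const lam⁻¹
      simpa [div_eq_mul_inv] using this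
    have h2 := h1.exp
    rw [h2.fderiv]
    simp [smul_smul]
  have hgradZ : gradv (fun z => Real.exp (-V t z / lam)) x = (E * (-(1 / lam))) • G := by
    funext i
    simp only [gradv, Pi.smul_apply, smul_eq_mul]
    rw [hfder x hVx]
    rw [hE, hG]
    rfl
  have hdotZ : f t x ⬝ᵥ gradv (fun z => Real.exp (-V t z / lam)) x = (E * (-(1 / lam))) * F := by
    rw [hgradZ, dotProduct_smul, smul_eq_mul, hF]
  -- Hessian of Z
  have hhess : ∀ i j, hessm (fun z => Real.exp (-V t z / lam)) x i j
      = E * ((1 / lam ^ 2) * (G i * G j) - (1 / lam) * H i j) := by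
    intro i j
    have hev : (fun y => fderiv ℝ (fun z => Real.exp (-V t z / lam)) y (Pi.single j 1))
        =ᶠ[nhds x] fun y => Real.exp (-V t y / lam) * (-(1 / lam))
            * fderiv ℝ (V t) y (Pi.single j 1) :=
      hx1.mono fun y hy => hfder y hy (Pi.single j 1)
    have hEdiff : DifferentiableAt ℝ (fun y => Real.exp (-V t y / lam)) x := by
      have := ((hVx.neg).mul_const lam⁻¹).exp
      simpa [div_eq_mul_inv] using this
    have hDj : DifferentiableAt ℝ (fun y => fderiv ℝ (V t) y (Pi.single j 1)) x :=
      hx2.clm_apply (differentiableAt_const _)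
    have h1 : hessm (fun z => Real.exp (-V t z / lam)) x i j
        = fderiv ℝ (fun y => Real.exp (-V t y / lam) * (-(1 / lam))
            * fderiv ℝ (V t) y (Pi.single j 1)) x (Pi.single i 1) := by
      simp only [hessm, Matrix.of_apply]
      rw [hev.fderiv_eq]
    rw [h1, fderiv_fun_mul (hEdiff.mul_const _) hDj]
    have hHij : fderiv ℝ (fun y => fderiv ℝ (V t) y (Pi.single j 1)) x (Pi.single i 1)
        = H i j := rfl
    simp only [ContinuousLinearMap.add_apply, ContinuousLinearMap.smul_apply, smul_eq_mul]
    rw [fderiv_mul_const hEdiff, hHij]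
    simp only [ContinuousLinearMap.smul_apply, smul_eq_mul]
    rw [hfder x hVx (Pi.single i 1)]
    have hGi : fderiv ℝ (V t) x (Pi.single i 1) = G i := rfl
    have hGj : fderiv ℝ (V t) x (Pi.single j 1) = G j := rfl
    rw [hGi, hGj, ← hE]
    field_simp
    ring
  have hhessZ : hessm (fun z => Real.exp (-V t z / lam)) x
      = (E * (1 / lam ^ 2)) • Matrix.vecMulVec G G - (E * (1 / lam)) • H := by
    ext i j
    rw [hhess i j]
    simp [Matrix.vecMulVec_apply]
    ring
  have htr : (A * hessm (fun z => Real.exp (-V t z / lam)) x).trace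
      = E * ((1 / lam ^ 2) * S - (1 / lam) * T) := by
    rw [hhessZ, Matrix.mul_sub, Matrix.mul_smul, Matrix.mul_smul, Matrix.trace_sub,
      Matrix.trace_smul, Matrix.trace_smul, trace_mul_vecMulVec, smul_eq_mul, smul_eq_mul,
      ← hS, ← hT]
    ring
  -- assemble
  have hZt : (fun y => Real.exp (-V t y / lam)) = (fun s y => Real.exp (-V s y / lam)) t := rfl
  have hZtx : (fun s y => Real.exp (-V s y / lam)) t x = E := rfl
  rw [hBR, hSsmul]
  rw [show (deriv (fun s => (fun s y => Real.exp (-V s y / lam)) s x) t)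
      = E * (-(1 / lam) * dV) from hdZ]
  rw [← hZt, hdotZ, htr]
  have h0 : E * (1 / lam) ≠ 0 := by positivity
  constructor
  · intro h
    calc E * (-(1 / lam) * dV) = (E * (1 / lam)) * (-dV) := by ring
      _ = (E * (1 / lam)) * (q t x + F - 1 / 2 * (lam⁻¹ * S) + 1 / 2 * T) := by rw [h]
      _ = q t x / lam * E - E * (-(1 / lam)) * F
            - 1 / 2 * (E * (1 / lam ^ 2 * S - 1 / lam * T)) := by field_simp; ring
  · intro h
    have h2 : (E * (1 / lam)) * (-dV)
        = (E * (1 / lam)) * (q t x + F - 1 / 2 * (lam⁻¹ * S) + 1 / 2 * T) := by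
      calc (E * (1 / lam)) * (-dV) = E * (-(1 / lam) * dV) := by ring
        _ = q t x / lam * E - E * (-(1 / lam)) * F
              - 1 / 2 * (E * (1 / lam ^ 2 * S - 1 / lam * T)) := h
        _ = (E * (1 / lam)) * (q t x + F - 1 / 2 * (lam⁻¹ * S) + 1 / 2 * T) := by
              field_simp; ring
    exact mul_left_cancel₀ h0 h2
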